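/- Every cubic (3-regular) simple graph whose edge chromatic number equals 3 admits an OCDC. -/

import Mathlib

open SimpleGraph

/-- The list of arcs of a cyclically-read list of vertices:
`[(l₀,l₁), (l₁,l₂), …, (lₙ₋₁,l₀)]`. -/
def cycleArcs {V : Type*} (l : List V) : List (V × V) := l.zip (l.rotate 1)

/-- `l` represents a directed cycle of the symmetric orientation of `G`:
a cyclic sequence of at least three pairwise distinct vertices with consecutive
vertices adjacent (cyclically). -/
def IsDirCycle {V : Type*} (G : SimpleGraph V) (l : List V) : Prop :=
  3 ≤ l.length ∧ l.Nodup ∧ ∀ p ∈ cycleArcs l, G.Adj p.1 p.2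

/-- An oriented cycle double cover of `G` : a collection of directed cycles of the
symmetric orientation of `G` such that each arc `(u,v)` (with `u ~ v` in `G`) lies
in exactly one of the cycles. -/
def IsOCDC {V : Type*} (G : SimpleGraph V) (C : Finset (List V)) : Prop :=
  (∀ l ∈ C, IsDirCycle G l) ∧
    ∀ u v : V, G.Adj u v → ∃! l : List V, l ∈ C ∧ (u, v) ∈ cycleArcs l

/-- `G` (a graph with vertex set of size `n`) has a small oriented cycle double cover:
an OCDC with at most `n - 1` directed cycles. -/
def HasSOCDC {V : Type*} (G : SimpleGraph V) : Prop :=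
  ∃ C : Finset (List V), IsOCDC G C ∧ C.card ≤ Nat.card V - 1

/-- `l` represents a directed path of the symmetric orientation of `G`. -/
def IsDirPath {V : Type*} (G : SimpleGraph V) (l : List V) : Prop :=
  l ≠ [] ∧ l.Nodup ∧ l.Chain' G.Adj

/-- An oriented perfect path double cover of `G`: a collection of directed paths of the
symmetric orientation of `G` such that each arc lies in exactly one path, and every
vertex occurs exactly once as the start and exactly once as the end of a path. -/
def IsOPPDC {V : Type*} (G : SimpleGraph V) (P : Finset (List V)) : Prop :=
  (∀ l ∈ P, IsDirPath G l) ∧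
    (∀ u v : V, G.Adj u v → ∃! l : List V, l ∈ P ∧ (u, v) ∈ l.zip l.tail) ∧
    (∀ v : V, ∃! l : List V, l ∈ P ∧ l.head? = some v) ∧
    (∀ v : V, ∃! l : List V, l ∈ P ∧ l.getLast? = some v)

lemma OCDCaux_exists_flip {V : Type*} (σ τ : Equiv.Perm V)
    (hσ : ∀ v, σ (σ v) = v) (hτ : ∀ v, τ (τ v) = v)
    (hσf : ∀ v, σ v ≠ v) (hτf : ∀ v, τ v ≠ v) :
    ∃ r : V → ZMod 2, (∀ v, r (σ v) = r v + 1) ∧ (∀ v, r (τ v) = r v + 1) := by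
  classical
  set ρ : Equiv.Perm V := σ * τ with hρ
  have hσ2 : σ * σ = 1 := Equiv.ext fun v => by
    simp [Equiv.Perm.mul_apply, hσ v]
  have hτ2 : τ * τ = 1 := Equiv.ext fun v => by
    simp [Equiv.Perm.mul_apply, hτ v]
  have hσinv : σ⁻¹ = σ := inv_eq_of_mul_eq_one_right hσ2
  have hτinv : τ⁻¹ = τ := inv_eq_of_mul_eq_one_right hτ2
  have hρinv : ρ⁻¹ = τ * σ := by rw [hρ, mul_inv_rev, hσinv, hτinv]
  have hconjσ : σ * ρ * σ⁻¹ = ρ⁻¹ := by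
    rw [hρinv, hσinv, hρ]
    calc σ * (σ * τ) * σ = (σ * σ) * τ * σ := by group
    _ = τ * σ := by rw [hσ2, one_mul]
  have hconjτ : τ * ρ * τ⁻¹ = ρ⁻¹ := by
    rw [hρinv, hτinv, hρ]
    calc τ * (σ * τ) * τ = τ * σ * (τ * τ) := by group
    _ = τ * σ := by rw [hτ2, mul_one]
  have hzc : ∀ (g : Equiv.Perm V), g * ρ * g⁻¹ = ρ⁻¹ → ∀ n : ℤ, g * ρ ^ n = ρ ^ (-n) * g := by
    intro g hg n
    have h1 : (MulAut.conj g) (ρ ^ n) = ρ ^ (-n) := by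
      rw [map_zpow]
      have h2 : (MulAut.conj g) ρ = ρ⁻¹ := by simpa [MulAut.conj_apply] using hg
      rw [h2, zpow_neg, inv_zpow]
    have h3 : g * ρ ^ n * g⁻¹ = ρ ^ (-n) := by simpa [MulAut.conj_apply] using h1
    calc g * ρ ^ n = g * ρ ^ n * g⁻¹ * g := by group
    _ = ρ ^ (-n) * g := by rw [h3]
  have hσz : ∀ (n : ℤ) (v : V), σ ((ρ ^ n) v) = (ρ ^ (-n)) (σ v) := fun n v => by
    rw [← Equiv.Perm.mul_apply, hzc σ hconjσ n, Equiv.Perm.mul_apply]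
  have hτz : ∀ (n : ℤ) (v : V), τ ((ρ ^ n) v) = (ρ ^ (-n)) (τ v) := fun n v => by
    rw [← Equiv.Perm.mul_apply, hzc τ hconjτ n, Equiv.Perm.mul_apply]
  have hzz : ∀ (a b : ℤ) (v : V), (ρ ^ a) ((ρ ^ b) v) = (ρ ^ (a + b)) v := fun a b v => by
    rw [← Equiv.Perm.mul_apply, ← zpow_add]
  have hτv : ∀ v, τ v = σ (ρ v) := fun v => by
    simp [hρ, Equiv.Perm.mul_apply, hσ]
  have hmid : ∀ (w : V) (k : ℤ), σ w ≠ (ρ ^ k) w := by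
    intro w k h
    rcases Int.even_or_odd k with ⟨m, hm⟩ | ⟨m, hm⟩
    · apply hσf ((ρ ^ m) w)
      calc σ ((ρ ^ m) w) = (ρ ^ (-m)) (σ w) := hσz m w
      _ = (ρ ^ (-m)) ((ρ ^ k) w) := by rw [h]
      _ = (ρ ^ (-m + k)) w := hzz _ _ _
      _ = (ρ ^ m) w := by have hmk : -m + k = m := by omega
                          rw [hmk]
    · apply hτf ((ρ ^ m) w)
      have hτw : τ w = (ρ ^ (k - 1)) w := by
        have h1 : ρ w = (ρ ^ (1 : ℤ)) w := by simp
        rw [hτv w, h1, hσz 1 w, h, hzz]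
        have hmk : (-1 + k : ℤ) = k - 1 := by omega
        rw [hmk]
      calc τ ((ρ ^ m) w) = (ρ ^ (-m)) (τ w) := hτz m w
      _ = (ρ ^ (-m)) ((ρ ^ (k - 1)) w) := by rw [hτw]
      _ = (ρ ^ (-m + (k - 1))) w := hzz _ _ _
      _ = (ρ ^ m) w := by have hmk : -m + (k - 1) = m := by omega
                          rw [hmk]
  -- the orbit relation
  have hτσ : ∀ v, τ (σ v) = (ρ ^ (-1 : ℤ)) v := by
    intro v
    have h1 : ρ (τ (σ v)) = v := by simp [hρ, Equiv.Perm.mul_apply, hτ, hσ]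
    rw [zpow_neg_one, Equiv.Perm.inv_def, Equiv.eq_symm_apply]
    exact h1
  let Rel : V → V → Prop := fun u w => ∃ n : ℤ, w = (ρ ^ n) u ∨ w = (ρ ^ n) (σ u)
  have hRσ : ∀ u, Rel u (σ u) := fun u => ⟨0, Or.inr (by simp)⟩
  have hRτ : ∀ u, Rel u (τ u) := fun u => by
    refine ⟨-1, Or.inr ?_⟩
    rw [hτv u]
    have h1 : ρ u = (ρ ^ (1 : ℤ)) u := by simp
    rw [h1, hσz 1 u]
  have hrefl : ∀ u, Rel u u := fun u => ⟨0, Or.inl (by simp)⟩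
  have hsymm : ∀ {u w}, Rel u w → Rel w u := by
    rintro u w ⟨n, h | h⟩
    · refine ⟨-n, Or.inl ?_⟩
      rw [h, hzz]
      simp
    · refine ⟨n, Or.inr ?_⟩
      have h1 : σ w = (ρ ^ (-n)) u := by rw [h, hσz n (σ u), hσ u]
      rw [h1, hzz]
      simp
  have htrans : ∀ {u w y}, Rel u w → Rel w y → Rel u y := by
    rintro u w y ⟨n, h | h⟩ ⟨m, h2 | h2⟩
    · exact ⟨m + n, Or.inl (by rw [h2, h, hzz])⟩
    · refine ⟨m + -n, Or.inr ?_⟩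
      rw [h2, h, hσz n u, hzz]
    · exact ⟨m + n, Or.inr (by rw [h2, h, hzz])⟩
    · refine ⟨m + -n, Or.inl ?_⟩
      rw [h2, h, hσz n (σ u), hσ u, hzz]
  letI st : Setoid V := ⟨Rel, ⟨hrefl, fun {a b} h => hsymm h, fun {a b c} h h2 => htrans h h2⟩⟩
  let rep : V → V := fun u => (Quotient.mk st u).out
  have hrep_rel : ∀ u, Rel (rep u) u := fun u => Quotient.exact (Quotient.out_eq (Quotient.mk st u))
  have hrep_congr : ∀ u w, Rel u w → rep u = rep w := by
    intro u w h
    show (Quotient.mk st u).out = (Quotient.mk st w).out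
    rw [Quotient.sound (s := st) h]
  let r : V → ZMod 2 := fun u => if ∃ n : ℤ, u = (ρ ^ n) (rep u) then 0 else 1
  -- a cancellation helper
  have hcanc : ∀ (w x : V) (n m : ℤ), (ρ ^ n) w = (ρ ^ m) x → w = (ρ ^ (-n + m)) x := by
    intro w x n m h
    have h3 := congrArg (⇑(ρ ^ (-n : ℤ))) h
    rw [hzz, hzz] at h3
    simpa using h3
  have hmid2 : ∀ (w : V) (n m : ℤ), (ρ ^ n) w ≠ (ρ ^ m) (σ w) := by
    intro w n m h
    have h2 := (hcanc _ _ _ _ h.symm).symm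
    exact hmid w (-m + n) h2.symm
  have hdich : ∀ u, (∃ n : ℤ, u = (ρ ^ n) (rep u)) ∨ (∃ n : ℤ, u = (ρ ^ n) (σ (rep u))) := by
    intro u
    rcases hrep_rel u with ⟨n, h | h⟩
    · exact Or.inl ⟨n, h⟩
    · exact Or.inr ⟨n, h⟩
  have hr0 : ∀ u (n : ℤ), u = (ρ ^ n) (rep u) → r u = 0 := fun u n h => if_pos ⟨n, h⟩
  have hr1 : ∀ u (n : ℤ), u = (ρ ^ n) (σ (rep u)) → r u = 1 := by
    intro u n h
    apply if_neg
    rintro ⟨m, hm⟩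
    exact hmid2 (rep u) m n (by rw [← hm, ← h])
  have hflipσ : ∀ u, r (σ u) = r u + 1 := by
    intro u
    have hrs : rep (σ u) = rep u := (hrep_congr u (σ u) (hRσ u)).symm
    rcases hdich u with ⟨n, hn⟩ | ⟨n, hn⟩
    · have hru : r u = 0 := hr0 u n hn
      have hform : σ u = (ρ ^ (-n)) (σ (rep u)) := by
        conv_lhs => rw [hn]
        rw [hσz]
      have hrsu : r (σ u) = 1 := by
        have := hr1 (σ u) (-n)
        rw [hrs] at this
        exact this hform
      rw [hru, hrsu]
      decide
    · have hru : r u = 1 := hr1 u n hn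
      have hform : σ u = (ρ ^ (-n)) (rep u) := by
        conv_lhs => rw [hn]
        rw [hσz n (σ (rep u)), hσ (rep u)]
      have hrsu : r (σ u) = 0 := by
        have := hr0 (σ u) (-n)
        rw [hrs] at this
        exact this hform
      rw [hru, hrsu]
      decide
  have hflipτ : ∀ u, r (τ u) = r u + 1 := by
    intro u
    have hrs : rep (τ u) = rep u := (hrep_congr u (τ u) (hRτ u)).symm
    rcases hdich u with ⟨n, hn⟩ | ⟨n, hn⟩
    · have hru : r u = 0 := hr0 u n hn
      have hform : τ u = (ρ ^ (-n + -1)) (σ (rep u)) := by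
        conv_lhs => rw [hn]
        rw [hτz n (rep u), hτv (rep u)]
        have h1 : ρ (rep u) = (ρ ^ (1 : ℤ)) (rep u) := by simp
        rw [h1, hσz 1 (rep u), hzz]
      have hrsu : r (τ u) = 1 := by
        have := hr1 (τ u) (-n + -1)
        rw [hrs] at this
        exact this hform
      rw [hru, hrsu]
      decide
    · have hru : r u = 1 := hr1 u n hn
      have hform : τ u = (ρ ^ (-n + -1)) (rep u) := by
        conv_lhs => rw [hn]
        rw [hτz n (σ (rep u)), hτσ (rep u), hzz]
      have hrsu : r (τ u) = 0 := by
        have := hr0 (τ u) (-n + -1)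
        rw [hrs] at this
        exact this hform
      rw [hru, hrsu]
      decide
  exact ⟨r, hflipσ, hflipτ⟩

def OCDCaux_valA : Fin 3 → ZMod 2 × ZMod 2
  | 0 => (1, 0)
  | 1 => (0, 1)
  | 2 => (1, 1)

def OCDCaux_gAux (p q t : ZMod 2) : Fin 3 → ZMod 2 × ZMod 2
  | 0 => (q, q + t)
  | 1 => (q + 1 + (p + q + t), q + t + (p + q + t))
  | 2 => (q + 1, q + t + 1 + (p + q + t))

def OCDCaux_nxtAux (s : ZMod 2) (i : Fin 3) : Fin 3 := if s = 0 then i + 1 else i + 2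

lemma OCDCaux_L1 : ∀ (p q t : ZMod 2) (i : Fin 3),
    OCDCaux_gAux p q t (OCDCaux_nxtAux (p + q + t) i) = OCDCaux_gAux p q t i + OCDCaux_valA i := by decide

lemma OCDCaux_L2 : ∀ (p q t : ZMod 2) (i j : Fin 3), OCDCaux_gAux p q t i = OCDCaux_gAux p q t j → i = j := by decide

lemma OCDCaux_L30 : ∀ p q t p' : ZMod 2, OCDCaux_gAux p' (q + 1) (t + 1) 0 = OCDCaux_gAux p q t 0 + OCDCaux_valA 0 := by decide
lemma OCDCaux_L31 : ∀ p q t q' : ZMod 2, OCDCaux_gAux (p + 1) q' (t + 1) 1 = OCDCaux_gAux p q t 1 + OCDCaux_valA 1 := by decide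
lemma OCDCaux_L32 : ∀ p q t t' : ZMod 2, OCDCaux_gAux (p + 1) (q + 1) t' 2 = OCDCaux_gAux p q t 2 + OCDCaux_valA 2 := by decide

lemma OCDCaux_L4 : ∀ (x : ZMod 2 × ZMod 2) (i : Fin 3), x + OCDCaux_valA i + OCDCaux_valA i = x := by decide

lemma OCDCaux_L5 : ∀ (s : ZMod 2) (i : Fin 3), OCDCaux_nxtAux s i ≠ i := by decide

lemma OCDCaux_L5inj : ∀ (s : ZMod 2) (i j : Fin 3), OCDCaux_nxtAux s i = OCDCaux_nxtAux s j → i = j := by decide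

lemma OCDCaux_master {V : Type} [Finite V] (G : SimpleGraph V) (nbr : Fin 3 → V → V)
    (hadj : ∀ i v, G.Adj v (nbr i v))
    (hinv : ∀ i v, nbr i (nbr i v) = v)
    (hcomplete : ∀ u v : V, G.Adj u v → ∃ i, nbr i u = v)
    (hinj : ∀ (i j : Fin 3) (v : V), nbr i v = nbr j v → i = j) :
    ∃ C : Finset (List V), IsOCDC G C := by
  classical
  let σ : Fin 3 → Equiv.Perm V := fun i => ⟨nbr i, nbr i, hinv i, hinv i⟩
  have hfpf : ∀ i v, nbr i v ≠ v := fun i v => (hadj i v).ne'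
  obtain ⟨r0, hr01, hr02⟩ :=
    OCDCaux_exists_flip (σ 1) (σ 2) (hinv 1) (hinv 2) (fun v => hfpf 1 v) (fun v => hfpf 2 v)
  obtain ⟨r1, hr10, hr12⟩ :=
    OCDCaux_exists_flip (σ 0) (σ 2) (hinv 0) (hinv 2) (fun v => hfpf 0 v) (fun v => hfpf 2 v)
  obtain ⟨r2, hr20, hr21⟩ :=
    OCDCaux_exists_flip (σ 0) (σ 1) (hinv 0) (hinv 1) (fun v => hfpf 0 v) (fun v => hfpf 1 v)
  let g : V → Fin 3 → ZMod 2 × ZMod 2 := fun v => OCDCaux_gAux (r0 v) (r1 v) (r2 v)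
  let sgn : V → ZMod 2 := fun v => r0 v + r1 v + r2 v
  let nxt : V → Fin 3 → Fin 3 := fun v => OCDCaux_nxtAux (sgn v)
  have hVERT : ∀ v i, g v (nxt v i) = g v i + OCDCaux_valA i := fun v i => OCDCaux_L1 _ _ _ i
  have hr01' : ∀ v, r0 (nbr 1 v) = r0 v + 1 := hr01
  have hr02' : ∀ v, r0 (nbr 2 v) = r0 v + 1 := hr02
  have hr10' : ∀ v, r1 (nbr 0 v) = r1 v + 1 := hr10
  have hr12' : ∀ v, r1 (nbr 2 v) = r1 v + 1 := hr12
  have hr20' : ∀ v, r2 (nbr 0 v) = r2 v + 1 := hr20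
  have hr21' : ∀ v, r2 (nbr 1 v) = r2 v + 1 := hr21
  have hfin3 : ∀ i : Fin 3, i = 0 ∨ i = 1 ∨ i = 2 := by decide
  have hEDGE : ∀ (i : Fin 3) (v : V), g (nbr i v) i = g v i + OCDCaux_valA i := by
    intro i v
    rcases hfin3 i with rfl | rfl | rfl
    · show OCDCaux_gAux (r0 (nbr 0 v)) (r1 (nbr 0 v)) (r2 (nbr 0 v)) 0 = _
      rw [hr10' v, hr20' v]
      exact OCDCaux_L30 _ _ _ _
    · show OCDCaux_gAux (r0 (nbr 1 v)) (r1 (nbr 1 v)) (r2 (nbr 1 v)) 1 = _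
      rw [hr01' v, hr21' v]
      exact OCDCaux_L31 _ _ _ _
    · show OCDCaux_gAux (r0 (nbr 2 v)) (r1 (nbr 2 v)) (r2 (nbr 2 v)) 2 = _
      rw [hr02' v, hr12' v]
      exact OCDCaux_L32 _ _ _ _
  -- dart dynamics
  let F : V × Fin 3 → V × Fin 3 := fun d => (nbr d.2 d.1, nxt (nbr d.2 d.1) d.2)
  have hFinj : Function.Injective F := by
    rintro ⟨v, i⟩ ⟨w, j⟩ h
    have h1 : nbr i v = nbr j w := congrArg Prod.fst h
    have h2 : nxt (nbr i v) i = nxt (nbr j w) j := congrArg Prod.snd h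
    rw [← h1] at h2
    have h3 : i = j := OCDCaux_L5inj _ _ _ h2
    subst h3
    have h4 : v = w := by
      have h5 := congrArg (nbr i) h1
      rwa [hinv, hinv] at h5
    rw [h4]
  have hper : ∀ d, ∃ n, 0 < n ∧ F^[n] d = d := by
    intro d
    obtain ⟨a, b, hab, h⟩ := Finite.exists_ne_map_eq_of_infinite (fun n : ℕ => F^[n] d)
    rcases Ne.lt_or_gt hab with hlt | hlt
    · refine ⟨b - a, by omega, ?_⟩
      apply hFinj.iterate a
      rw [← Function.iterate_add_apply]
      have he : a + (b - a) = b := by omega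
      rw [he, ← h]
    · refine ⟨a - b, by omega, ?_⟩
      apply hFinj.iterate b
      rw [← Function.iterate_add_apply]
      have he : b + (a - b) = a := by omega
      rw [he, h]
  have hg1 : ∀ d, g (F d).1 (F d).2 = g d.1 d.2 := by
    rintro ⟨v, i⟩
    show g (nbr i v) (nxt (nbr i v) i) = g v i
    rw [hVERT (nbr i v) i, hEDGE i v]
    exact OCDCaux_L4 _ _
  have hgn : ∀ (n : ℕ) d, g (F^[n] d).1 (F^[n] d).2 = g d.1 d.2 := by
    intro n
    induction n with
    | zero => intro d; rfl
    | succ n ih =>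
        intro d
        rw [Function.iterate_succ_apply', hg1 (F^[n] d)]
        exact ih d
  -- orbit setoid on darts
  let RelD : V × Fin 3 → V × Fin 3 → Prop := fun d e => ∃ n : ℕ, F^[n] d = e
  have hDrefl : ∀ d, RelD d d := fun d => ⟨0, rfl⟩
  have hDtrans : ∀ {d e f}, RelD d e → RelD e f → RelD d f := by
    rintro d e f ⟨n, hn⟩ ⟨m, hm⟩
    exact ⟨m + n, by rw [Function.iterate_add_apply, hn, hm]⟩
  have hDsymm : ∀ {d e}, RelD d e → RelD e d := by
    rintro d e ⟨n, hn⟩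
    obtain ⟨p, hp, hpd⟩ := hper d
    refine ⟨(n + 1) * p - n, ?_⟩
    rw [← hn, ← Function.iterate_add_apply]
    have h1 : (n + 1) * p - n + n = (n + 1) * p := by
      have h2 : n + 1 ≤ (n + 1) * p := Nat.le_mul_of_pos_right _ hp
      omega
    rw [h1]
    have h2 : Function.IsPeriodicPt F p d := hpd
    exact h2.const_mul (n + 1)
  letI stD : Setoid (V × Fin 3) :=
    ⟨RelD, ⟨hDrefl, fun {a b} h => hDsymm h, fun {a b c} h h2 => hDtrans h h2⟩⟩
  let repD : V × Fin 3 → V × Fin 3 := fun d => (Quotient.mk stD d).out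
  have hrepD_rel : ∀ d, RelD (repD d) d :=
    fun d => Quotient.exact (Quotient.out_eq (Quotient.mk stD d))
  have hrepD_congr : ∀ d e, RelD d e → repD d = repD e := by
    intro d e h
    show (Quotient.mk stD d).out = (Quotient.mk stD e).out
    rw [Quotient.sound (s := stD) h]
  have hrepD_idem : ∀ d, repD (repD d) = repD d := fun d => hrepD_congr (repD d) d (hrepD_rel d)
  -- minimal periods
  let K : V × Fin 3 → ℕ := fun e => Function.minimalPeriod F e
  have hKper : ∀ e, F^[K e] e = e := fun e => Function.iterate_minimalPeriod
  have hKpos : ∀ e, 0 < K e := by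
    intro e
    obtain ⟨n, hn, hne⟩ := hper e
    exact Function.IsPeriodicPt.minimalPeriod_pos hn hne
  have hKinj : ∀ (e : V × Fin 3) (t1 t2 : ℕ), t1 < t2 → t2 < K e → F^[t1] e ≠ F^[t2] e := by
    intro e t1 t2 h12 h2K heq
    have h3 : F^[t1] (F^[t2 - t1] e) = F^[t1] e := by
      rw [← Function.iterate_add_apply]
      have h4 : t1 + (t2 - t1) = t2 := by omega
      rw [h4]
      exact heq.symm
    have h4 : Function.IsPeriodicPt F (t2 - t1) e := hFinj.iterate t1 h3
    exact Function.not_isPeriodicPt_of_pos_of_lt_minimalPeriod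
      (by omega) (lt_of_le_of_lt (Nat.sub_le t2 t1) h2K) h4
  have hKmod : ∀ (e : V × Fin 3) (n : ℕ), F^[n % K e] e = F^[n] e :=
    fun e n => Function.iterate_mod_minimalPeriod_eq
  -- darts of the same vertex in one orbit coincide
  have hsame : ∀ (e : V × Fin 3) (t1 t2 : ℕ), t1 < K e → t2 < K e →
      (F^[t1] e).1 = (F^[t2] e).1 → t1 = t2 := by
    intro e t1 t2 h1 h2 hfst
    by_contra hne
    have key : ∀ a b : ℕ, a < b → b < K e → (F^[a] e).1 ≠ (F^[b] e).1 := by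
      intro a b hab hbK heq
      have hg2 : g (F^[a] e).1 (F^[a] e).2 = g (F^[b] e).1 (F^[b] e).2 := by
        rw [hgn a e, hgn b e]
      rw [heq] at hg2
      have hsnd : (F^[a] e).2 = (F^[b] e).2 := OCDCaux_L2 _ _ _ _ _ hg2
      exact hKinj e a b hab hbK (Prod.ext_iff.mpr ⟨heq, hsnd⟩)
    rcases Nat.lt_or_ge t1 t2 with h | h
    · exact key t1 t2 h h2 hfst
    · exact key t2 t1 (by omega) h1 hfst.symm
  -- minimal period at least 3
  have hK3 : ∀ e, 3 ≤ K e := by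
    intro e
    have hn1 : K e ≠ 1 := by
      intro h
      have h2 := hKper e
      rw [h] at h2
      have h3 : nbr e.2 e.1 = e.1 := congrArg Prod.fst (by simpa using h2)
      exact hfpf _ _ h3
    have hn2 : K e ≠ 2 := by
      intro h
      have h2 := hKper e
      rw [h] at h2
      obtain ⟨v, i⟩ := e
      have h3 : F (F (v, i)) = (v, i) := by
        have h4 : F^[2] (v, i) = F (F (v, i)) := by
          rw [Function.iterate_succ_apply, Function.iterate_one]
        rw [← h4, h2]
      set w := nbr i v with hw
      set j := nxt w i with hj
      have hFvi : F (v, i) = (w, j) := rfl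
      rw [hFvi] at h3
      have hfst : nbr j w = v := congrArg Prod.fst h3
      have hsnd : nxt (nbr j w) j = i := congrArg Prod.snd h3
      have h5 : nbr j v = w := by
        have h6 := congrArg (nbr j) hfst
        rw [hinv] at h6
        exact h6.symm
      have h7 : i = j := hinj i j v (by rw [← hw]; exact h5.symm)
      rw [hfst] at hsnd
      rw [← h7] at hsnd
      exact OCDCaux_L5 (sgn v) i hsnd
    have := hKpos e
    omega
  -- the vertex list of an orbit
  let olist : V × Fin 3 → List V := fun e => (List.range (K e)).map (fun t => (F^[t] e).1)
  have holen : ∀ e, (olist e).length = K e := by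
    intro e
    simp [olist]
  have hnodup : ∀ e, (olist e).Nodup := by
    intro e
    apply List.Nodup.map_on _ List.nodup_range
    intro t1 h1 t2 h2 heq
    rw [List.mem_range] at h1 h2
    exact hsame e t1 t2 h1 h2 heq
  have hoget : ∀ (e : V × Fin 3) (t : ℕ) (h : t < (olist e).length),
      (olist e)[t] = (F^[t] e).1 := by
    intro e t h
    simp [olist]
  have hnext : ∀ (e : V × Fin 3) (t : ℕ), t < K e → F^[(t + 1) % K e] e = F (F^[t] e) := by
    intro e t ht
    rcases Nat.lt_or_ge (t + 1) (K e) with h | h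
    · rw [Nat.mod_eq_of_lt h, Function.iterate_succ_apply']
    · have h1 : t + 1 = K e := by omega
      rw [h1, Nat.mod_self]
      show e = F (F^[t] e)
      have h2 : F (F^[t] e) = F^[t + 1] e := (Function.iterate_succ_apply' F t e).symm
      rw [h2, h1]
      exact (hKper e).symm
  have hcyclen : ∀ e, (cycleArcs (olist e)).length = K e := by
    intro e
    simp [cycleArcs, holen e]
  have hcycget : ∀ (e : V × Fin 3) (t : ℕ) (h : t < (cycleArcs (olist e)).length),
      (cycleArcs (olist e))[t] = ((F^[t] e).1, (F (F^[t] e)).1) := by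
    intro e t h
    have htK : t < K e := by rw [← hcyclen e]; exact h
    simp only [cycleArcs]
    rw [List.getElem_zip]
    have h2 : ((olist e).rotate 1)[t]'(by
        rw [List.length_rotate, holen e]; exact htK) = (F^[(t + 1) % K e] e).1 := by
      rw [List.getElem_rotate]
      have h3 : (t + 1) % (olist e).length = (t + 1) % K e := by rw [holen e]
      simp only [h3]
      exact hoget e ((t + 1) % K e) (by rw [holen e]; exact Nat.mod_lt _ (hKpos e))
    rw [hoget e t (by rw [holen e]; exact htK)]
    rw [h2, hnext e t htK]
  have harc : ∀ (e : V × Fin 3) (p : V × V), p ∈ cycleArcs (olist e) ↔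
      ∃ t, t < K e ∧ F^[t] e = (p.1, (F^[t] e).2) ∧ nbr (F^[t] e).2 p.1 = p.2 := by
    intro e p
    constructor
    · intro hp
      obtain ⟨t, ht, hpt⟩ := List.mem_iff_getElem.mp hp
      rw [hcycget e t ht] at hpt
      have htK : t < K e := by rw [← hcyclen e]; exact ht
      refine ⟨t, htK, ?_, ?_⟩
      · rw [← hpt]
      · rw [← hpt]
    · rintro ⟨t, htK, h1, h2⟩
      have ht : t < (cycleArcs (olist e)).length := by rw [hcyclen e]; exact htK
      have h3 := hcycget e t ht
      have hfst : (F^[t] e).1 = p.1 := by rw [h1]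
      have h4 : (cycleArcs (olist e))[t] = p := by
        rw [h3]
        have h5 : (F (F^[t] e)).1 = nbr (F^[t] e).2 (F^[t] e).1 := rfl
        rw [Prod.ext_iff]
        constructor
        · exact hfst
        · show (F (F^[t] e)).1 = p.2
          rw [h5, hfst, h2]
      rw [← h4]
      exact List.getElem_mem ht
  have hdircycle : ∀ e, IsDirCycle G (olist e) := by
    intro e
    refine ⟨by rw [holen e]; exact hK3 e, hnodup e, ?_⟩
    intro p hp
    obtain ⟨t, htK, h1, h2⟩ := (harc e p).mp hp
    have h3 : G.Adj p.1 (nbr (F^[t] e).2 p.1) := by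
      have := hadj (F^[t] e).2 p.1
      exact this
    rwa [h2] at h3
  -- the finset of cycles
  haveI : Fintype (V × Fin 3) := Fintype.ofFinite _
  let C : Finset (List V) := Finset.image (fun d => olist (repD d)) Finset.univ
  refine ⟨C, ?_, ?_⟩
  · intro l hl
    obtain ⟨d, _, hd⟩ := Finset.mem_image.mp hl
    rw [← hd]
    exact hdircycle (repD d)
  · intro u v huv
    obtain ⟨i, hi⟩ := hcomplete u v huv
    set d0 : V × Fin 3 := (u, i) with hd0
    refine ⟨olist (repD d0), ⟨Finset.mem_image_of_mem _ (Finset.mem_univ d0), ?_⟩, ?_⟩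
    · rw [harc (repD d0) (u, v)]
      obtain ⟨n, hn⟩ := hrepD_rel d0
      refine ⟨n % K (repD d0), Nat.mod_lt _ (hKpos _), ?_, ?_⟩
      · rw [hKmod (repD d0) n, hn]
      · rw [hKmod (repD d0) n, hn]
        exact hi
    · rintro l' ⟨hl'C, hl'arc⟩
      obtain ⟨d', _, hd'⟩ := Finset.mem_image.mp hl'C
      rw [← hd'] at hl'arc ⊢
      obtain ⟨t, htK, h1, h2⟩ := (harc (repD d') (u, v)).mp hl'arc
      have h3 : (F^[t] (repD d')).2 = i := by
        apply hinj _ _ u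
        rw [h2]
        exact hi.symm
      have h4 : F^[t] (repD d') = d0 := by
        rw [h1, h3]
      have h5 : RelD (repD d') d0 := ⟨t, h4⟩
      have h6 : repD (repD d') = repD d0 := hrepD_congr _ _ h5
      rw [hrepD_idem d'] at h6
      rw [h6]

/-- Every cubic graph whose edge chromatic number (the chromatic number of its line
graph) equals `3` admits an OCDC. -/
theorem exists_OCDC_of_cubic_chromatic_three {V : Type} [Finite V] (G : SimpleGraph V)
    (hcubic : ∀ v : V, (G.neighborSet v).ncard = 3)
    (hchi : G.lineGraph.chromaticNumber = 3) :
    ∃ C : Finset (List V), IsOCDC G C := by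
  
  classical
  have hcol : G.lineGraph.Colorable 3 := by
    rw [← SimpleGraph.chromaticNumber_le_iff_colorable, hchi]
    norm_num
  obtain ⟨col⟩ := hcol
  haveI : Fintype V := Fintype.ofFinite V
  haveI : ∀ v : V, Fintype (G.neighborSet v) := fun v => Fintype.ofFinite _
  have hcard : ∀ v : V, Fintype.card (G.neighborSet v) = 3 := by
    intro v
    have h1 : Nat.card (G.neighborSet v) = 3 := by
      rw [Nat.card_coe_set_eq]
      exact hcubic v
    rwa [Nat.card_eq_fintype_card] at h1
  let φ : ∀ v : V, G.neighborSet v → Fin 3 := fun v w =>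
    col ⟨s(v, (w : V)), (G.mem_edgeSet).mpr w.2⟩
  have hφinj : ∀ v, Function.Injective (φ v) := by
    intro v w w' heq
    by_contra hne
    have hedne : (⟨s(v, (w : V)), (G.mem_edgeSet).mpr w.2⟩ : G.edgeSet) ≠
        ⟨s(v, (w' : V)), (G.mem_edgeSet).mpr w'.2⟩ := by
      intro hcon
      apply hne
      have h2 : s(v, (w : V)) = s(v, (w' : V)) := congrArg Subtype.val hcon
      exact Subtype.ext ((Sym2.congr_right).mp h2)
    have hadj : G.lineGraph.Adj ⟨s(v, (w : V)), (G.mem_edgeSet).mpr w.2⟩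
        ⟨s(v, (w' : V)), (G.mem_edgeSet).mpr w'.2⟩ := by
      rw [SimpleGraph.lineGraph_adj_iff_exists]
      exact ⟨hedne, v, Sym2.mem_mk_left _ _, Sym2.mem_mk_left _ _⟩
    exact col.valid hadj heq
  have hφbij : ∀ v, Function.Bijective (φ v) := by
    intro v
    rw [Fintype.bijective_iff_injective_and_card]
    exact ⟨hφinj v, by rw [hcard v, Fintype.card_fin]⟩
  let ψ : ∀ v : V, Fin 3 ≃ G.neighborSet v := fun v => (Equiv.ofBijective _ (hφbij v)).symm
  let nbr : Fin 3 → V → V := fun i v => ((ψ v) i : V)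
  have hadj : ∀ i v, G.Adj v (nbr i v) := fun i v => ((ψ v) i).2
  have hspec : ∀ (i : Fin 3) (v : V), φ v ((ψ v) i) = i := by
    intro i v
    exact (Equiv.ofBijective _ (hφbij v)).apply_symm_apply i
  have huniq : ∀ (v w : V) (h : G.Adj v w) (i : Fin 3),
      col ⟨s(v, w), (G.mem_edgeSet).mpr h⟩ = i → nbr i v = w := by
    intro v w h i hcoli
    have h1 : φ v ⟨w, h⟩ = i := hcoli
    have h3 : (⟨w, h⟩ : G.neighborSet v) = (ψ v) i := by
      apply hφinj v
      rw [hspec i v, h1]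
    exact (congrArg Subtype.val h3).symm
  have hcomplete : ∀ u v : V, G.Adj u v → ∃ i, nbr i u = v := by
    intro u v h
    exact ⟨col ⟨s(u, v), (G.mem_edgeSet).mpr h⟩, huniq u v h _ rfl⟩
  have hcolnbr : ∀ (i : Fin 3) (v : V),
      col ⟨s(v, nbr i v), (G.mem_edgeSet).mpr (hadj i v)⟩ = i := by
    intro i v
    exact hspec i v
  have hinv : ∀ i v, nbr i (nbr i v) = v := by
    intro i v
    apply huniq (nbr i v) v (hadj i v).symm i
    have h1 : (⟨s(nbr i v, v), (G.mem_edgeSet).mpr (hadj i v).symm⟩ : G.edgeSet) =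
        ⟨s(v, nbr i v), (G.mem_edgeSet).mpr (hadj i v)⟩ := Subtype.ext (Sym2.eq_swap)
    rw [h1]
    exact hcolnbr i v
  have hinj : ∀ (i j : Fin 3) (v : V), nbr i v = nbr j v → i = j := by
    intro i j v heq
    have h1 : (⟨s(v, nbr i v), (G.mem_edgeSet).mpr (hadj i v)⟩ : G.edgeSet) =
        ⟨s(v, nbr j v), (G.mem_edgeSet).mpr (hadj j v)⟩ := Subtype.ext (congrArg (fun w => s(v, w)) heq)
    rw [← hcolnbr i v, ← hcolnbr j v, h1]
  exact OCDCaux_master G nbr hadj hinv hcomplete hinj
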